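/- For i ∈ {1, 2, 3}, let Sᵢ := {(i, t, i·t) : t ∈ [1,2]} ⊆ ℝ³ (the segment of the ruling line λᵢ = {x = i} ∩ Σ of the hyperbolic paraboloid Σ = {z = xy} bounded by the planes y = 1 and y = 2). Then for any p ∈ ℝ³ and any u ∈ ℝ³ with u ≠ 0, the line {p + t • u : t ∈ ℝ} intersects each of S₁, S₂, S₃ if and only if there exists b ∈ [1,2] such that {p + t • u : t ∈ ℝ} = {(s, b, s·b) : s ∈ ℝ}. In other words, the set of line transversals to {S₁, S₂, S₃} is exactly {ℓ_b : b ∈ [1,2]}, where ℓ_b := {(s, b, s·b) : s ∈ ℝ}. -/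

import Mathlib

/-- **Lemma (transversals to three rulings of the hyperbolic paraboloid).**
For `i = 1, 2, 3` let `Sᵢ = {(i, t, i·t) : t ∈ [1,2]} ⊆ ℝ³` be the segment of the ruling
line `λᵢ = {x = i} ∩ Σ` of the hyperbolic paraboloid `Σ = {z = x·y}` bounded by the
planes `y = 1` and `y = 2`. Then a line `{p + t • u : t ∈ ℝ}` (with `u ≠ 0`) intersects
each of `S₁, S₂, S₃` if and only if it equals `ℓ_b = {(s, b, s·b) : s ∈ ℝ}` for some
`b ∈ [1,2]`. -/
theorem transversals_to_three_ruling_segments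
    (S : ℝ → Set (EuclideanSpace ℝ (Fin 3)))
    (hS : ∀ a : ℝ, S a = {q | ∃ t ∈ Set.Icc (1 : ℝ) 2,
        q 0 = a ∧ q 1 = t ∧ q 2 = a * t})
    (ℓ : ℝ → Set (EuclideanSpace ℝ (Fin 3)))
    (hℓ : ∀ b : ℝ, ℓ b = {q | ∃ s : ℝ, q 0 = s ∧ q 1 = b ∧ q 2 = s * b})
    (p u : EuclideanSpace ℝ (Fin 3)) (hu : u ≠ 0) :
    ((∃ t : ℝ, p + t • u ∈ S 1) ∧ (∃ t : ℝ, p + t • u ∈ S 2) ∧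
        (∃ t : ℝ, p + t • u ∈ S 3)) ↔
      ∃ b ∈ Set.Icc (1 : ℝ) 2, {x : EuclideanSpace ℝ (Fin 3) | ∃ t : ℝ, x = p + t • u} = ℓ b := by
  constructor
  · rintro ⟨⟨t₁, h₁⟩, ⟨t₂, h₂⟩, ⟨t₃, h₃⟩⟩
    rw [hS] at h₁ h₂ h₃
    obtain ⟨b₁, hb₁, e10, e11, e12⟩ := h₁
    obtain ⟨b₂, hb₂, e20, e21, e22⟩ := h₂
    obtain ⟨b₃, hb₃, e30, e31, e32⟩ := h₃
    simp only [PiLp.add_apply, PiLp.smul_apply, smul_eq_mul] at e10 e11 e12 e20 e21 e22 e30 e31 e32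
    have h0 : u 0 * (t₂ - t₁) = 1 := by linear_combination e20 - e10
    have h0' : u 0 * (t₃ - t₁) = 2 := by linear_combination e30 - e10
    have ht12 : t₂ - t₁ ≠ 0 := by
      intro h; rw [h, mul_zero] at h0; exact one_ne_zero h0.symm
    have hu0 : u 0 ≠ 0 := by
      intro h; rw [h, zero_mul] at h0; exact one_ne_zero h0.symm
    have htt : t₃ - t₁ = 2 * (t₂ - t₁) := by
      have h2 : u 0 * (t₃ - t₁) = u 0 * (2 * (t₂ - t₁)) := by linear_combination h0' - 2 * h0
      exact mul_left_cancel₀ hu0 h2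
    have hy : b₃ - b₁ = 2 * (b₂ - b₁) := by
      linear_combination -e31 + 2 * e21 - e11 + u 1 * htt
    have hz : 3 * b₃ - b₁ = 2 * (2 * b₂ - b₁) := by
      linear_combination -e32 + 2 * e22 - e12 + u 2 * htt
    have hb21 : b₂ = b₁ := by linarith
    have hu1 : u 1 = 0 := by
      have h : (t₂ - t₁) * u 1 = 0 := by linear_combination e21 - e11 + hb21
      exact (mul_eq_zero.mp h).resolve_left ht12
    have hu2 : u 2 = b₁ * u 0 := by
      have h : (t₂ - t₁) * (u 2 - b₁ * u 0) = 0 := by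
        linear_combination e22 - e12 - b₁ * h0 + 2 * hb21
      have := (mul_eq_zero.mp h).resolve_left ht12
      linarith
    refine ⟨b₁, hb₁, ?_⟩
    ext q
    rw [hℓ]
    simp only [Set.mem_setOf_eq]
    constructor
    · rintro ⟨t, rfl⟩
      refine ⟨p 0 + t * u 0, ?_, ?_, ?_⟩ <;>
        simp only [PiLp.add_apply, PiLp.smul_apply, smul_eq_mul]
      · linear_combination e11 + t * hu1 - hu1 * t₁
      · linear_combination e12 - b₁ * e10 + t * hu2 - t₁ * hu2
    · rintro ⟨s, hq0, hq1, hq2⟩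
      set t : ℝ := t₁ + (s - 1) * (t₂ - t₁) with ht_def
      refine ⟨t, ?_⟩
      have c0 : q 0 = p 0 + t * u 0 := by
        linear_combination hq0 - e10 - (s - 1) * h0
      have c1 : q 1 = p 1 + t * u 1 := by
        linear_combination hq1 - e11 + (t₁ - t) * hu1
      have c2 : q 2 = p 2 + t * u 2 := by
        linear_combination hq2 - e12 + (t₁ - t) * hu2 - (s - 1) * b₁ * h0
      ext i
      fin_cases i
      · exact c0
      · exact c1
      · exact c2
  · rintro ⟨b, hb, hset⟩
    have gen : ∀ a : ℝ, ∃ t : ℝ, p + t • u ∈ S a := by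
      intro a
      have hmem : (!₂[a, b, a * b] : EuclideanSpace ℝ (Fin 3)) ∈ ℓ b := by
        rw [hℓ]
        refine ⟨a, ?_, ?_, ?_⟩ <;> simp
      rw [← hset] at hmem
      obtain ⟨t, ht⟩ := hmem
      refine ⟨t, ?_⟩
      rw [hS, ← ht]
      refine ⟨b, hb, ?_, ?_, ?_⟩ <;> simp
    exact ⟨gen 1, gen 2, gen 3⟩
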